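/- Let Q_k(n,L;η) be the monic polynomials in η defined by Q_{−1}=0, Q_0=1 and Q_{k+1}(n,L;η) = η Q_k(n,L;η) − h_k(n,L) Q_{k−1}(n,L;η), with h_k(n,L) = k(2L+k+1)(2n−k+2)(2L+2n−k+3)/(4(2n−2k+1)(2n−2k+3)). Then for all k ≥ 0: Q_k(n,L;η) = α_k(n,L) Q_k(n−1,L;η) + β_k(n,L) η Q_{k−1}(n−1,L;η), where α_k(n,L) = 2(2n−2k+1)(L+n+1)/((2n−k+1)(2L+2n−k+2)) and β_k(n,L) = k(2L+k+1)/((2n−k+1)(2L+2n−k+2)). -/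

import Mathlib

/-- α_k(n,L) = 2(2n-2k+1)(L+n+1) / ((2n-k+1)(2L+2n-k+2)). -/
noncomputable def alphF (k n L : ℝ) : ℝ :=
  2 * (2*n - 2*k + 1) * (L + n + 1) / ((2*n - k + 1) * (2*L + 2*n - k + 2))

/-- β_k(n,L) = k(2L+k+1) / ((2n-k+1)(2L+2n-k+2)). -/
noncomputable def betF (k n L : ℝ) : ℝ :=
  k * (2*L + k + 1) / ((2*n - k + 1) * (2*L + 2*n - k + 2))

/-- h_k(n,L) = k(2L+k+1)(2n-k+2)(2L+2n-k+3) / (4(2n-2k+1)(2n-2k+3)). -/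
noncomputable def hF (k n L : ℝ) : ℝ :=
  k * (2*L + k + 1) * (2*n - k + 2) * (2*L + 2*n - k + 3) /
    (4 * (2*n - 2*k + 1) * (2*n - 2*k + 3))

/-- The monic polynomials Q_k(n,L;η): Q₀ = 1, Q₁ = η (from Q_{-1} = 0) and
Q_{k+1} = η Q_k - h_k(n,L) Q_{k-1}. -/
noncomputable def Qpoly (n L : ℝ) : ℕ → ℝ → ℝ
  | 0, _ => 1
  | 1, η => η
  | (k + 2), η => η * Qpoly n L (k + 1) η - hF ((k : ℝ) + 1) n L * Qpoly n L k η

lemma hF_zero (m L : ℝ) : hF 0 m L = 0 := by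
  simp [hF]

lemma Q_rec (m L η : ℝ) (k : ℕ) :
    Qpoly m L (k+1) η = η * Qpoly m L k η - hF k m L * Qpoly m L (k-1) η := by
  cases k with
  | zero => simp [Qpoly, hF_zero]
  | succ j => show Qpoly m L (j+2) η = _; rw [Qpoly]; push_cast; norm_num

lemma sum_one (x n L : ℝ) (h1 : 2*n - x + 1 ≠ 0) (h2 : 2*L + 2*n - x + 2 ≠ 0) :
    alphF x n L + betF x n L = 1 := by
  unfold alphF betF
  rw [← add_div, div_eq_one_iff_eq (mul_ne_zero h1 h2)]
  ring

lemma idII (x n L : ℝ)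
    (d1 : 2*n - 2*x - 1 ≠ 0) (d2 : 2*n - 2*x + 1 ≠ 0) (d3 : 2*n - 2*x - 3 ≠ 0)
    (d4 : 2*n - x + 1 ≠ 0) (d5 : 2*L + 2*n - x + 2 ≠ 0)
    (d6 : 2*n - x - 1 ≠ 0) (d7 : 2*L + 2*n - x ≠ 0) :
    hF (x+1) n L * alphF x n L = alphF (x+2) n L * hF (x+1) (n-1) L := by
  unfold hF alphF
  rw [div_mul_div_comm, div_mul_div_comm, div_eq_div_iff]
  · ring
  · intro h
    rcases mul_eq_zero.1 h with h | h
    · rcases mul_eq_zero.1 h with h | h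
      · rcases mul_eq_zero.1 h with h | h
        · norm_num at h
        · exact d1 (by linarith [h])
      · exact d2 (by linarith [h])
    · exact (mul_ne_zero d4 d5) (by linarith [h]; )
  · intro h
    rcases mul_eq_zero.1 h with h | h
    · exact (mul_ne_zero d6 d7) (by linarith [h])
    · rcases mul_eq_zero.1 h with h | h
      · rcases mul_eq_zero.1 h with h | h
        · norm_num at h
        · exact d3 (by linarith [h])
      · exact d1 (by linarith [h])

lemma idIII (x n L : ℝ)
    (d1 : 2*n - 2*x - 1 ≠ 0) (d2 : 2*n - 2*x + 1 ≠ 0)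
    (d4 : 2*n - x + 1 ≠ 0) (d5 : 2*L + 2*n - x + 2 ≠ 0)
    (d6 : 2*n - x ≠ 0) (d7 : 2*L + 2*n - x + 1 ≠ 0) :
    hF (x+1) n L * betF x n L = betF (x+1) n L * hF x (n-1) L := by
  unfold hF betF
  rw [div_mul_div_comm, div_mul_div_comm, div_eq_div_iff]
  · ring
  · intro h
    rcases mul_eq_zero.1 h with h | h
    · rcases mul_eq_zero.1 h with h | h
      · rcases mul_eq_zero.1 h with h | h
        · norm_num at h
        · exact d1 (by linarith [h])
      · exact d2 (by linarith [h])
    · exact (mul_ne_zero d4 d5) (by linarith [h])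
  · intro h
    rcases mul_eq_zero.1 h with h | h
    · exact (mul_ne_zero d6 d7) (by linarith [h])
    · rcases mul_eq_zero.1 h with h | h
      · rcases mul_eq_zero.1 h with h | h
        · norm_num at h
        · exact d1 (by linarith [h])
      · exact d2 (by linarith [h])
/-- For all k ≥ 0 : Q_k(n,L;η) = α_k(n,L) Q_k(n-1,L;η) + β_k(n,L) η Q_{k-1}(n-1,L;η),
whenever the denominators occurring in h_j, α_k, β_k do not vanish.  (For k = 0 the
last term vanishes since β₀ = 0.) -/
theorem stmt_13 (n L η : ℝ) (k : ℕ)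
    (hden : ∀ j : ℕ, j ≤ k →
      2*n - 2*(j:ℝ) + 1 ≠ 0 ∧ 2*n - 2*(j:ℝ) + 3 ≠ 0 ∧
      2*(n-1) - 2*(j:ℝ) + 1 ≠ 0 ∧ 2*(n-1) - 2*(j:ℝ) + 3 ≠ 0 ∧
      2*n - (j:ℝ) + 1 ≠ 0 ∧ 2*L + 2*n - (j:ℝ) + 2 ≠ 0) :
    Qpoly n L k η = alphF k n L * Qpoly (n-1) L k η +
      betF k n L * η * Qpoly (n-1) L (k - 1) η := by
  revert hden
  induction k using Nat.twoStepInduction with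
  | zero =>
    intro hden
    obtain ⟨-, -, -, -, e0, f0⟩ := hden 0 (le_refl _)
    push_cast at e0 f0
    have e0' : 2*n + 1 ≠ 0 := fun h => e0 (by linarith)
    have f0' : 2*L + 2*n + 2 ≠ 0 := fun h => f0 (by linarith)
    simp only [Qpoly, Nat.cast_zero, Nat.zero_sub]
    unfold alphF betF
    simp only [zero_mul, zero_div, add_zero, mul_one]
    rw [eq_comm, div_eq_one_iff_eq (mul_ne_zero e0 f0)]
    ring
  | one =>
    intro hden
    obtain ⟨-, -, -, -, e1, f1⟩ := hden 1 (le_refl _)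
    push_cast at e1 f1
    have hs := sum_one 1 n L (by intro h; exact e1 (by linarith))
      (by intro h; exact f1 (by linarith))
    simp only [Qpoly, Nat.cast_one, Nat.sub_self]
    linear_combination (-η) * hs
  | more k ih ih1 =>
    intro hden
    obtain ⟨a0, b0, c0, d0, e0, f0⟩ := hden k (by omega)
    obtain ⟨a1, b1, c1, d1, e1, f1⟩ := hden (k+1) (by omega)
    obtain ⟨a2, b2, c2, d2, e2, f2⟩ := hden (k+2) (le_refl _)
    push_cast at a0 b0 c0 d0 e0 f0 a1 b1 c1 d1 e1 f1 a2 b2 c2 d2 e2 f2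
    set x : ℝ := (k : ℝ) with hx
    have IH1 := ih1 (fun j hj => hden j (by omega))
    have IH0 := ih (fun j hj => hden j (by omega))
    simp only [Nat.add_sub_cancel] at IH1 ⊢
    push_cast at IH1 IH0 ⊢
    have R := Q_rec (n-1) L η k
    have Rn2 := Q_rec n L η (k+1)
    have Rm2 := Q_rec (n-1) L η (k+1)
    simp only [Nat.add_sub_cancel] at Rn2 Rm2
    push_cast at R Rn2 Rm2
    have I1 : alphF (x+1) n L + betF (x+1) n L = 1 :=
      sum_one (x+1) n L (fun h => e1 (by linarith)) (fun h => f1 (by linarith))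
    have I2 : alphF (x+2) n L + betF (x+2) n L = 1 :=
      sum_one (x+2) n L (fun h => e2 (by linarith)) (fun h => f2 (by linarith))
    have II : hF (x+1) n L * alphF x n L = alphF (x+2) n L * hF (x+1) (n-1) L :=
      idII x n L (fun h => a1 (by linarith)) (fun h => a0 (by linarith))
        (fun h => a2 (by linarith)) (fun h => e0 (by linarith))
        (fun h => f0 (by linarith)) (fun h => e2 (by linarith))
        (fun h => f2 (by linarith))
    have III : hF (x+1) n L * betF x n L = betF (x+1) n L * hF x (n-1) L :=
      idIII x n L (fun h => a1 (by linarith)) (fun h => a0 (by linarith))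
        (fun h => e0 (by linarith)) (fun h => f0 (by linarith))
        (fun h => e1 (by linarith)) (fun h => f1 (by linarith))
    rw [Rn2, Rm2]
    linear_combination η * IH1 - hF (x+1) n L * IH0 - betF (x+1) n L * η * R
      - Qpoly (n-1) L k η * II - η * Qpoly (n-1) L (k-1) η * III
      + η * Qpoly (n-1) L (k+1) η * I1 - η * Qpoly (n-1) L (k+1) η * I2
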